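/- Let d ≥ n ≥ 1 with d even, n ≡ 2 (mod 4), and k a field of characteristic 0. Then the class in GW(k) of the Scheja–Storch form on the Artinian local k-algebra k[w₁,…,wₙ, z₀]/(C(d,1)z₀^{d−1} + w₁, C(d,2)z₀^{d−2} + w₂², …, C(d,n)z₀^{d−n} + wₙⁿ, z₀^d) is (d·n!/2)·ℍ. -/

import Mathlib

open MvPolynomial

namespace SS16

/-! ### Combinatorics of the monomial basis -/

/-- half-weight of variable `i` -/
def hf (d i : ℕ) : ℕ := if i = 0 then 0 else (d - (i+1))/2

/-- weight function on exponents of variable `i` -/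
def ff (d i σ : ℕ) : ℕ := if σ = 0 then 0 else if σ = i then 2 * hf d i else hf d i

/-- The index type of the monomial basis. -/
abbrev MB (n d : ℕ) := (∀ i : Fin n, Fin ((i:ℕ)+1)) × Fin d

def δf (n d : ℕ) (m : MB n d) : ℕ := (m.2:ℕ) + ∑ i : Fin n, ff d (i:ℕ) ((m.1 i):ℕ)

def Ntot (n d : ℕ) : ℕ := (d-1) + ∑ i : Fin n, 2 * hf d (i:ℕ)

def SB (n d : ℕ) : Finset (MB n d) := Finset.univ.filter (fun m => Ntot n d < 2 * δf n d m)

lemma ff_le (d i σ : ℕ) : ff d i σ ≤ 2 * hf d i := by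
  unfold ff; split_ifs <;> omega

lemma two_hf_le (d i : ℕ) : 2 * hf d i ≤ d - (i+1) := by
  unfold hf; split_ifs <;> omega

lemma percoord (d i σ σ' : ℕ) (hσ : σ ≤ i) (hσ' : σ' ≤ i) :
    ff d i σ + ff d i σ' ≤ 2 * hf d i + (σ+σ')/(i+1) * (d-(i+1)) := by
  rcases Nat.lt_or_ge (σ+σ') (i+1) with hc | hc
  · have hdiv : (σ+σ')/(i+1) = 0 := Nat.div_eq_of_lt hc
    rw [hdiv]
    unfold ff; split_ifs <;> omega
  · have hdiv : 1 ≤ (σ+σ')/(i+1) := (Nat.one_le_div_iff (Nat.succ_pos i)).2 hc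
    have h1 := two_hf_le d i
    have h2 := ff_le d i σ
    have h3 := ff_le d i σ'
    have h4 : (d-(i+1)) ≤ (σ+σ')/(i+1) * (d-(i+1)) := Nat.le_mul_of_pos_left _ hdiv
    omega

lemma ff_add_rev (d i σ : ℕ) (hσ : σ ≤ i) : ff d i σ + ff d i (i - σ) = 2 * hf d i := by
  unfold ff hf; split_ifs <;> omega

/-- the involution on the monomial basis -/
def ι (n d : ℕ) (m : MB n d) : MB n d := (fun i => (m.1 i).rev, m.2.rev)

lemma ι_invol (n d : ℕ) (m : MB n d) : ι n d (ι n d m) = m := by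
  unfold ι
  simp [Fin.rev_rev]

lemma δf_add_ι (n d : ℕ) (hd : 1 ≤ d) (m : MB n d) :
    δf n d m + δf n d (ι n d m) = Ntot n d := by
  unfold δf ι Ntot
  dsimp only
  have hb : (m.2:ℕ) + ((m.2.rev):ℕ) = d - 1 := by
    have := m.2.isLt
    simp only [Fin.val_rev]
    omega
  have hs : ∑ i : Fin n, ff d (i:ℕ) ((m.1 i):ℕ)
      + ∑ i : Fin n, ff d (i:ℕ) (((m.1 i).rev):ℕ)
      = ∑ i : Fin n, 2 * hf d (i:ℕ) := by
    rw [← Finset.sum_add_distrib]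
    refine Finset.sum_congr rfl (fun i _ => ?_)
    have h1 : (((m.1 i).rev):ℕ) = (i:ℕ) - ((m.1 i):ℕ) := by
      simp only [Fin.val_rev]; omega
    rw [h1]
    exact ff_add_rev d (i:ℕ) ((m.1 i):ℕ) (Nat.lt_succ_iff.mp (m.1 i).isLt)
  omega

lemma Ntot_odd (n d : ℕ) (hd1 : 1 ≤ d) (hd : d % 2 = 0) : Ntot n d % 2 = 1 := by
  unfold Ntot
  have h2 : 2 ∣ ∑ i : Fin n, 2 * hf d (i:ℕ) := Finset.dvd_sum (fun i _ => dvd_mul_right 2 _)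
  omega

lemma mem_SB_iff (n d : ℕ) (m : MB n d) : m ∈ SB n d ↔ Ntot n d < 2 * δf n d m := by
  unfold SB
  rw [Finset.mem_filter]
  simp only [Finset.mem_univ, true_and]

lemma ι_mem_SB (n d : ℕ) (hd1 : 1 ≤ d) (hd : d % 2 = 0) (m : MB n d) :
    ι n d m ∈ SB n d ↔ m ∉ SB n d := by
  have h1 := δf_add_ι n d hd1 m
  have h2 := Ntot_odd n d hd1 hd
  simp only [mem_SB_iff]
  omega

lemma card_prod_fin (n : ℕ) : Fintype.card (∀ i : Fin n, Fin ((i:ℕ)+1)) = n.factorial := by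
  rw [Fintype.card_pi]
  simp only [Fintype.card_fin]
  rw [Fin.prod_univ_eq_prod_range (fun i => i + 1) n]
  exact Finset.prod_range_add_one_eq_factorial n

lemma card_MB (n d : ℕ) : Fintype.card (MB n d) = d * n.factorial := by
  rw [Fintype.card_prod, card_prod_fin, Fintype.card_fin, mul_comm]

lemma card_SB (n d : ℕ) (hd1 : 1 ≤ d) (hd : d % 2 = 0) :
    2 * (SB n d).card = d * n.factorial := by
  classical
  have hbij : (SB n d).card = (Finset.univ.filter (fun m => ¬ (Ntot n d < 2 * δf n d m))).card := by
    apply Finset.card_bij' (fun m _ => ι n d m) (fun m _ => ι n d m)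
    · intro a ha
      simp only [Finset.mem_filter, Finset.mem_univ, true_and]
      rw [← mem_SB_iff]
      exact fun h => (ι_mem_SB n d hd1 hd a).mp h ha
    · intro a ha
      simp only [Finset.mem_filter, Finset.mem_univ, true_and] at ha
      rw [← mem_SB_iff] at ha
      exact (ι_mem_SB n d hd1 hd a).mpr ha
    · intro a _; exact ι_invol n d a
    · intro a _; exact ι_invol n d a
  have := Finset.card_filter_add_card_filter_not (s := (Finset.univ : Finset (MB n d)))
    (p := fun m => Ntot n d < 2 * δf n d m)
  rw [Finset.card_univ, card_MB] at this
  unfold SB at hbij ⊢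
  omega

lemma key_product_bound (n d : ℕ) (hd1 : 1 ≤ d) (m m' : MB n d)
    (hm : m ∈ SB n d) (hm' : m' ∈ SB n d) :
    d ≤ (m.2:ℕ) + (m'.2:ℕ) +
      ∑ i : Fin n, (((m.1 i:ℕ) + (m'.1 i:ℕ))/((i:ℕ)+1)) * (d - ((i:ℕ)+1)) := by
  rw [mem_SB_iff] at hm hm'
  have hsum : ∑ i : Fin n, (ff d (i:ℕ) ((m.1 i):ℕ) + ff d (i:ℕ) ((m'.1 i):ℕ))
      ≤ (∑ i : Fin n, 2 * hf d (i:ℕ)) +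
        ∑ i : Fin n, (((m.1 i:ℕ) + (m'.1 i:ℕ))/((i:ℕ)+1)) * (d - ((i:ℕ)+1)) := by
    rw [← Finset.sum_add_distrib]
    refine Finset.sum_le_sum (fun i _ => ?_)
    exact percoord d (i:ℕ) _ _ (Nat.lt_succ_iff.mp (m.1 i).isLt)
      (Nat.lt_succ_iff.mp (m'.1 i).isLt)
  rw [Finset.sum_add_distrib] at hsum
  unfold δf at hm hm'
  unfold Ntot at hm hm'
  omega


variable {K V : Type} [Field K] [CharZero K] [AddCommGroup V] [Module K V]
  [FiniteDimensional K V]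

set_option maxHeartbeats 1000000 in
lemma hyperbolic_of_isotropic_basis_subset
    {M : Type} [Fintype M] [DecidableEq M] (bas : Module.Basis M K V)
    (B : V →ₗ[K] V →ₗ[K] K)
    (hsymm : ∀ x y, B x y = B y x)
    (hnd : ∀ x, (∀ y, B x y = 0) → x = 0)
    (S : Finset M) (hne : S.Nonempty)
    (hiso : ∀ s ∈ S, ∀ t ∈ S, B (bas s) (bas t) = 0)
    (hcard : Fintype.card M = 2 * S.card) :
    ∃ e : V ≃ₗ[K] ({x // x ∈ S} × Fin 2 → K),
      ∀ q r, B q r = ∑ s : {x // x ∈ S},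
        (e q (s,(0:Fin 2)) * e r (s,(0:Fin 2)) - e q (s,(1:Fin 2)) * e r (s,(1:Fin 2))) := by
  classical
  have hndB : LinearMap.BilinForm.Nondegenerate B :=
    ⟨hnd, fun y hy => hnd y (fun x => by rw [hsymm]; exact hy x)⟩
  have gbb : ∀ s t : {x // x ∈ S}, B (bas s.1) (bas t.1) = 0 :=
    fun s t => hiso s.1 s.2 t.1 t.2
  set v' : {x // x ∈ S} → V := fun s => (LinearMap.BilinForm.toDual B hndB).symm (bas.coord s.1)
    with hv'def
  have hv' : ∀ (s : {x // x ∈ S}) (y : V), B (v' s) y = bas.repr y s.1 := by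
    intro s y
    rw [hv'def]
    exact LinearMap.BilinForm.apply_toDual_symm_apply (bas.coord s.1) y
  have hv'bas : ∀ (s t : {x // x ∈ S}), B (v' s) (bas t.1) = if s = t then 1 else 0 := by
    intro s t
    rw [hv' s (bas t.1), Module.Basis.repr_self, Finsupp.single_apply]
    by_cases h : s = t
    · simp [h]
    · rw [if_neg (fun hc => h (Subtype.ext hc.symm)), if_neg h]
  set c : {x // x ∈ S} → {x // x ∈ S} → K := fun s t => B (v' s) (v' t) with hcdef
  have hcsymm : ∀ s t, c s t = c t s := fun s t => hsymm _ _
  set v : {x // x ∈ S} → V :=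
    fun s => v' s - (2⁻¹ : K) • ∑ t : {x // x ∈ S}, c s t • bas t.1 with hvdef
  have hBsum : ∀ (s : {x // x ∈ S}) (y : V),
      B ((∑ t : {x // x ∈ S}, c s t • bas t.1)) y = ∑ t : {x // x ∈ S}, c s t * B (bas t.1) y := by
    intro s y
    rw [map_sum, LinearMap.sum_apply]
    refine Finset.sum_congr rfl (fun t _ => ?_)
    rw [map_smul, LinearMap.smul_apply, smul_eq_mul]
  have hvbas : ∀ (s t : {x // x ∈ S}), B (v s) (bas t.1) = if s = t then 1 else 0 := by
    intro s t
    rw [hvdef]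
    simp only [map_sub, map_smul, LinearMap.sub_apply, LinearMap.smul_apply]
    rw [hBsum, hv'bas]
    have : ∀ u : {x // x ∈ S}, c s u * B (bas u.1) (bas t.1) = 0 := by
      intro u
      rw [hiso u.1 u.2 t.1 t.2, mul_zero]
    rw [Finset.sum_congr rfl (fun u _ => this u)]
    simp
  have hbasv : ∀ (s t : {x // x ∈ S}), B (bas t.1) (v s) = if s = t then 1 else 0 := by
    intro s t; rw [hsymm]; exact hvbas s t
  have hv'v : ∀ (s t : {x // x ∈ S}), B (v' s) (v t) = c s t - 2⁻¹ * c t s := by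
    intro s t
    rw [hvdef]
    simp only [map_sub, map_smul, smul_eq_mul]
    have h1 : B (v' s) (∑ u : {x // x ∈ S}, c t u • bas u.1)
        = ∑ u : {x // x ∈ S}, c t u * B (v' s) (bas u.1) := by
      rw [map_sum]
      refine Finset.sum_congr rfl (fun u _ => ?_)
      rw [map_smul, smul_eq_mul]
    rw [h1]
    have h2 : ∀ u : {x // x ∈ S}, c t u * B (v' s) (bas u.1) = if s = u then c t u else 0 := by
      intro u
      rw [hv'bas]
      by_cases h : s = u <;> simp [h]
    rw [Finset.sum_congr rfl (fun u _ => h2 u), Finset.sum_ite_eq]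
    simp [hcdef]
  have hv_eq : ∀ s, v s = v' s - (2⁻¹ : K) • ∑ t : {x // x ∈ S}, c s t • bas t.1 :=
    fun s => rfl
  have hvv : ∀ (s t : {x // x ∈ S}), B (v s) (v t) = 0 := by
    intro s t
    have P1 : B (v' s) (v' t) = c s t := rfl
    have P2 : B (∑ u : {x // x ∈ S}, c s u • bas u.1) (v' t) = c s t := by
      rw [hBsum]
      have hh : ∀ u : {x // x ∈ S}, u ∈ Finset.univ →
          c s u * B (bas u.1) (v' t) = if t = u then c s u else 0 := by
        intro u _
        rw [hsymm, hv'bas]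
        by_cases h : t = u <;> simp [h]
      rw [Finset.sum_congr rfl hh, Finset.sum_ite_eq]
      simp
    have P3 : B (v' s) (∑ u : {x // x ∈ S}, c t u • bas u.1) = c t s := by
      rw [map_sum]
      have hh : ∀ u : {x // x ∈ S}, u ∈ Finset.univ →
          B (v' s) (c t u • bas u.1) = if s = u then c t u else 0 := by
        intro u _
        rw [map_smul, smul_eq_mul, hv'bas]
        by_cases h : s = u <;> simp [h]
      rw [Finset.sum_congr rfl hh, Finset.sum_ite_eq]
      simp
    have P4 : B (∑ u : {x // x ∈ S}, c s u • bas u.1)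
        (∑ u : {x // x ∈ S}, c t u • bas u.1) = 0 := by
      rw [hBsum]
      have hh : ∀ u : {x // x ∈ S}, u ∈ Finset.univ →
          c s u * B (bas u.1) (∑ w : {x // x ∈ S}, c t w • bas w.1) = 0 := by
        intro u _
        rw [map_sum]
        simp only [map_smul, smul_eq_mul, gbb, mul_zero, Finset.sum_const_zero]
      rw [Finset.sum_congr rfl hh]
      simp
    conv_lhs => rw [hv_eq s, hv_eq t]
    simp only [map_sub, map_smul, LinearMap.sub_apply, LinearMap.smul_apply, smul_eq_mul]
    rw [P1, P2, P3, P4]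
    rw [hcsymm t s]
    ring
  -- the family and its independence
  set γ : ({x // x ∈ S} ⊕ {x // x ∈ S}) → V := Sum.elim (fun s => bas s.1) v with hγdef
  have hind : LinearIndependent K γ := by
    rw [Fintype.linearIndependent_iff]
    intro cc hcc
    rw [Fintype.sum_sum_type] at hcc
    simp only [hγdef, Sum.elim_inl, Sum.elim_inr] at hcc
    have hβ : ∀ t : {x // x ∈ S}, cc (Sum.inr t) = 0 := by
      intro t
      have happ := congrArg (fun x => B x (bas t.1)) hcc
      simp only [map_add, map_sum, map_smul, LinearMap.add_apply, LinearMap.sum_apply,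
        LinearMap.smul_apply, smul_eq_mul, map_zero, LinearMap.zero_apply,
        gbb, hvbas, mul_zero, mul_ite, mul_one, Finset.sum_const_zero, zero_add,
        Finset.sum_ite_eq', Finset.mem_univ, if_true] at happ
      exact happ
    have hrest : ∑ s : {x // x ∈ S}, cc (Sum.inl s) • bas s.1 = 0 := by
      simp only [hβ, zero_smul, Finset.sum_const_zero, add_zero] at hcc
      exact hcc
    have hindb : LinearIndependent K (fun s : {x // x ∈ S} => bas s.1) :=
      bas.linearIndependent.comp _ Subtype.val_injective
    have := Fintype.linearIndependent_iff.mp hindb (fun s => cc (Sum.inl s)) hrest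
    intro i
    cases i with
    | inl s => exact this s
    | inr t => exact hβ t
  have hScard : Fintype.card {x // x ∈ S} = S.card := Fintype.card_coe S
  have hnecoe : Nonempty {x // x ∈ S} := by
    obtain ⟨x, hx⟩ := hne; exact ⟨⟨x, hx⟩⟩
  have hcardsum : Fintype.card ({x // x ∈ S} ⊕ {x // x ∈ S}) = Module.finrank K V := by
    rw [Fintype.card_sum, hScard, Module.finrank_eq_card_basis bas, hcard]
    omega
  set Γ : Module.Basis ({x // x ∈ S} ⊕ {x // x ∈ S}) K V :=
    basisOfLinearIndependentOfCardEqFinrank hind hcardsum with hΓdef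
  have hΓ : ∀ i, Γ i = γ i := by
    intro i
    rw [hΓdef, coe_basisOfLinearIndependentOfCardEqFinrank]
  -- Gram matrix entries
  have gram : ∀ i j, B (Γ i) (Γ j) =
      (match i, j with
       | Sum.inl s, Sum.inl t => 0
       | Sum.inl s, Sum.inr t => if t = s then 1 else 0
       | Sum.inr s, Sum.inl t => if s = t then 1 else 0
       | Sum.inr s, Sum.inr t => 0) := by
    intro i j
    rw [hΓ, hΓ]
    cases i with
    | inl s => cases j with
      | inl t => exact hiso s.1 s.2 t.1 t.2
      | inr t => simp only [hγdef, Sum.elim_inl, Sum.elim_inr]; exact hbasv t s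
    | inr s => cases j with
      | inl t => simp only [hγdef, Sum.elim_inl, Sum.elim_inr]; exact hvbas s t
      | inr t => exact hvv s t
  have g1 : ∀ s t : {x // x ∈ S}, B (Γ (Sum.inl s)) (Γ (Sum.inl t)) = 0 := by
    intro s t; rw [hΓ, hΓ]; exact gbb s t
  have g2 : ∀ s t : {x // x ∈ S}, B (Γ (Sum.inl s)) (Γ (Sum.inr t)) = if t = s then 1 else 0 := by
    intro s t; rw [hΓ, hΓ]; exact hbasv t s
  have g3 : ∀ s t : {x // x ∈ S}, B (Γ (Sum.inr s)) (Γ (Sum.inl t)) = if s = t then 1 else 0 := by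
    intro s t; rw [hΓ, hΓ]; exact hvbas s t
  have g4 : ∀ s t : {x // x ∈ S}, B (Γ (Sum.inr s)) (Γ (Sum.inr t)) = 0 := by
    intro s t; rw [hΓ, hΓ]; exact hvv s t
  have haA : ∀ x y : V, B x y = ∑ i, Γ.repr x i * B (Γ i) y := by
    intro x y
    conv_lhs => rw [← Module.Basis.sum_repr Γ x]
    rw [map_sum, LinearMap.sum_apply]
    exact Finset.sum_congr rfl (fun i _ => by rw [map_smul, LinearMap.smul_apply, smul_eq_mul])
  have haB : ∀ (y : V) (i), B (Γ i) y = ∑ j, Γ.repr y j * B (Γ i) (Γ j) := by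
    intro y i
    conv_lhs => rw [← Module.Basis.sum_repr Γ y]
    rw [map_sum]
    exact Finset.sum_congr rfl (fun j _ => by rw [map_smul, smul_eq_mul])
  have hexp : ∀ x y : V, B x y = ∑ s : {x // x ∈ S},
      (Γ.repr x (Sum.inl s) * Γ.repr y (Sum.inr s)
        + Γ.repr x (Sum.inr s) * Γ.repr y (Sum.inl s)) := by
    intro x y
    rw [haA x y]
    have hBi : ∀ i, Γ.repr x i * B (Γ i) y = ∑ j, Γ.repr x i * (Γ.repr y j * B (Γ i) (Γ j)) := by
      intro i
      rw [haB y i, Finset.mul_sum]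
    rw [Finset.sum_congr rfl (fun i _ => hBi i)]
    rw [Fintype.sum_sum_type]
    have e1 : ∀ s : {x // x ∈ S},
        (∑ j, Γ.repr x (Sum.inl s) * (Γ.repr y j * B (Γ (Sum.inl s)) (Γ j)))
        = Γ.repr x (Sum.inl s) * Γ.repr y (Sum.inr s) := by
      intro s
      rw [Fintype.sum_sum_type]
      simp only [g1, g2, mul_zero, mul_ite, mul_one, ite_mul, zero_mul,
        Finset.sum_const_zero, zero_add, mul_ite, mul_zero]
      rw [Finset.sum_ite_eq' Finset.univ s
        (fun t => Γ.repr x (Sum.inl s) * Γ.repr y (Sum.inr t))]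
      simp
    have e2 : ∀ s : {x // x ∈ S},
        (∑ j, Γ.repr x (Sum.inr s) * (Γ.repr y j * B (Γ (Sum.inr s)) (Γ j)))
        = Γ.repr x (Sum.inr s) * Γ.repr y (Sum.inl s) := by
      intro s
      rw [Fintype.sum_sum_type]
      simp only [g3, g4, mul_zero, mul_ite, mul_one, ite_mul, zero_mul,
        Finset.sum_const_zero, add_zero, mul_ite, mul_zero]
      rw [Finset.sum_ite_eq Finset.univ s
        (fun t => Γ.repr x (Sum.inr s) * Γ.repr y (Sum.inl t))]
      simp
    rw [Finset.sum_congr rfl (fun s _ => e1 s), Finset.sum_congr rfl (fun s _ => e2 s),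
      ← Finset.sum_add_distrib]
  -- the final change of coordinates
  set L1 : (({x // x ∈ S} ⊕ {x // x ∈ S}) → K) →ₗ[K] ({x // x ∈ S} × Fin 2 → K) :=
    { toFun := fun u p => if p.2 = 0 then u (Sum.inl p.1) + 2⁻¹ * u (Sum.inr p.1)
        else u (Sum.inl p.1) - 2⁻¹ * u (Sum.inr p.1)
      map_add' := by
        intro u1 u2; funext p
        by_cases h : p.2 = 0 <;> simp [h] <;> ring
      map_smul' := by
        intro a u; funext p
        by_cases h : p.2 = 0 <;> simp [h, smul_eq_mul] <;> ring } with hL1def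
  set L2 : ({x // x ∈ S} × Fin 2 → K) →ₗ[K] (({x // x ∈ S} ⊕ {x // x ∈ S}) → K) :=
    { toFun := fun w => Sum.elim (fun s => 2⁻¹ * (w (s,(0:Fin 2)) + w (s,(1:Fin 2))))
        (fun s => w (s,(0:Fin 2)) - w (s,(1:Fin 2)))
      map_add' := by
        intro u1 u2; funext i
        cases i <;> simp <;> ring
      map_smul' := by
        intro a u; funext i
        cases i <;> simp [smul_eq_mul] <;> ring } with hL2def
  have h2K : (2:K) * 2⁻¹ = 1 := mul_inv_cancel₀ two_ne_zero
  have hL12 : L1.comp L2 = LinearMap.id := by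
    apply LinearMap.ext; intro w
    funext p
    obtain ⟨s, j⟩ := p
    revert j
    rw [Fin.forall_fin_two]
    constructor
    · simp only [hL1def, hL2def, LinearMap.comp_apply, LinearMap.coe_mk, AddHom.coe_mk,
        LinearMap.id_apply, Sum.elim_inl, Sum.elim_inr, if_true,
        (show ((1:Fin 2) = 0) ↔ False from by decide), if_false]
      linear_combination (w (s, 0)/2 + w (s,1)/2) * h2K
    · simp only [hL1def, hL2def, LinearMap.comp_apply, LinearMap.coe_mk, AddHom.coe_mk,
        LinearMap.id_apply, Sum.elim_inl, Sum.elim_inr, if_true,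
        (show ((1:Fin 2) = 0) ↔ False from by decide), if_false]
      linear_combination (w (s, 0)/2 + w (s,1)/2 - w (s,1)) * h2K
  have hL21 : L2.comp L1 = LinearMap.id := by
    apply LinearMap.ext; intro u
    funext i
    cases i with
    | inl s =>
      simp only [hL1def, hL2def, LinearMap.comp_apply, LinearMap.coe_mk, AddHom.coe_mk,
        LinearMap.id_apply, Sum.elim_inl, if_true,
        (show ((1:Fin 2) = 0) ↔ False from by decide), if_false]
      linear_combination (u (Sum.inl s)/2) * h2K
    | inr s =>
      simp only [hL1def, hL2def, LinearMap.comp_apply, LinearMap.coe_mk, AddHom.coe_mk,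
        LinearMap.id_apply, Sum.elim_inr, if_true,
        (show ((1:Fin 2) = 0) ↔ False from by decide), if_false]
      linear_combination (u (Sum.inr s)) * h2K
  set E2 : (({x // x ∈ S} ⊕ {x // x ∈ S}) → K) ≃ₗ[K] ({x // x ∈ S} × Fin 2 → K) :=
    LinearEquiv.ofLinear L1 L2 hL12 hL21 with hE2def
  refine ⟨Γ.equivFun.trans E2, ?_⟩
  intro q r
  have heval : ∀ (x : V) (s : {x // x ∈ S}) (j : Fin 2),
      (Γ.equivFun.trans E2) x (s, j) = if j = 0
        then Γ.repr x (Sum.inl s) + 2⁻¹ * Γ.repr x (Sum.inr s)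
        else Γ.repr x (Sum.inl s) - 2⁻¹ * Γ.repr x (Sum.inr s) := by
    intro x s j
    simp only [LinearEquiv.trans_apply, hE2def, LinearEquiv.ofLinear_apply, hL1def,
      LinearMap.coe_mk, AddHom.coe_mk, Module.Basis.equivFun_apply]
  rw [hexp q r]
  refine Finset.sum_congr rfl (fun s _ => ?_)
  rw [heval, heval, heval, heval]
  rw [if_pos rfl, if_pos rfl, if_neg (by decide), if_neg (by decide)]
  set a := (Γ.repr q) (Sum.inl s)
  set b := (Γ.repr q) (Sum.inr s)
  set a' := (Γ.repr r) (Sum.inl s)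
  set b' := (Γ.repr r) (Sum.inr s)
  linear_combination (a * b' + a' * b - 2⁻¹ * b * b') * h2K

section NFsec

open MvPolynomial Finsupp

variable (k : Type) [Field k] (n d : ℕ)

def qf (α : Fin (n+1) →₀ ℕ) (i : Fin n) : ℕ := α i.castSucc / ((i:ℕ)+1)

def rf (α : Fin (n+1) →₀ ℕ) (i : Fin n) : ℕ := α i.castSucc % ((i:ℕ)+1)

def Ez (α : Fin (n+1) →₀ ℕ) : ℕ :=
  α (Fin.last n) + ∑ i : Fin n, qf n α i * (d - ((i:ℕ)+1))

def cf (α : Fin (n+1) →₀ ℕ) : k :=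
  ∏ i : Fin n, (-((d.choose ((i:ℕ)+1) : ℕ) : k))^(qf n α i)

def tgt (α : Fin (n+1) →₀ ℕ) (h : Ez n d α < d) : MB n d :=
  (fun i => ⟨rf n α i, Nat.mod_lt _ (Nat.succ_pos _)⟩, ⟨Ez n d α, h⟩)

noncomputable def NF (α : Fin (n+1) →₀ ℕ) : MB n d → k :=
  if h : Ez n d α < d then Pi.single (tgt n d α h) (cf k n d α) else 0

lemma castSucc_ne_last (i : Fin n) : (i.castSucc : Fin (n+1)) ≠ Fin.last n :=
  (Fin.castSucc_lt_last i).ne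

lemma apply_add_single_castSucc (α : Fin (n+1) →₀ ℕ) (i : Fin n) (t : ℕ) (j : Fin n) :
    (α + Finsupp.single i.castSucc t) j.castSucc = α j.castSucc + if j = i then t else 0 := by
  rw [Finsupp.add_apply, Finsupp.single_apply]
  congr 1
  by_cases h : j = i
  · rw [if_pos h, if_pos (by rw [h])]
  · rw [if_neg (fun hc => h (Fin.castSucc_injective n hc.symm)), if_neg h]

lemma apply_add_single_castSucc_last (α : Fin (n+1) →₀ ℕ) (i : Fin n) (t : ℕ) :
    (α + Finsupp.single i.castSucc t) (Fin.last n) = α (Fin.last n) := by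
  rw [Finsupp.add_apply, Finsupp.single_apply, if_neg (castSucc_ne_last n i), add_zero]

lemma apply_add_single_last (α : Fin (n+1) →₀ ℕ) (t : ℕ) (j : Fin n) :
    (α + Finsupp.single (Fin.last n) t) j.castSucc = α j.castSucc := by
  rw [Finsupp.add_apply, Finsupp.single_apply, if_neg (fun hc => (castSucc_ne_last n j) hc.symm),
    add_zero]

lemma apply_add_single_last_last (α : Fin (n+1) →₀ ℕ) (t : ℕ) :
    (α + Finsupp.single (Fin.last n) t) (Fin.last n) = α (Fin.last n) + t := by
  rw [Finsupp.add_apply, Finsupp.single_eq_same]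

lemma qf_add_castSucc (α : Fin (n+1) →₀ ℕ) (i : Fin n) (j : Fin n) :
    qf n (α + Finsupp.single i.castSucc ((i:ℕ)+1)) j = qf n α j + if j = i then 1 else 0 := by
  unfold qf
  rw [apply_add_single_castSucc]
  by_cases h : j = i
  · subst h
    rw [if_pos rfl, if_pos rfl, Nat.add_div_right _ (Nat.succ_pos _)]
  · rw [if_neg h, if_neg h, add_zero, add_zero]

lemma rf_add_castSucc (α : Fin (n+1) →₀ ℕ) (i : Fin n) (j : Fin n) :
    rf n (α + Finsupp.single i.castSucc ((i:ℕ)+1)) j = rf n α j := by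
  unfold rf
  rw [apply_add_single_castSucc]
  by_cases h : j = i
  · subst h
    rw [if_pos rfl, Nat.add_mod_right]
  · rw [if_neg h, add_zero]

lemma qf_add_last (α : Fin (n+1) →₀ ℕ) (t : ℕ) (j : Fin n) :
    qf n (α + Finsupp.single (Fin.last n) t) j = qf n α j := by
  unfold qf; rw [apply_add_single_last]

lemma rf_add_last (α : Fin (n+1) →₀ ℕ) (t : ℕ) (j : Fin n) :
    rf n (α + Finsupp.single (Fin.last n) t) j = rf n α j := by
  unfold rf; rw [apply_add_single_last]

lemma Ez_add_castSucc (α : Fin (n+1) →₀ ℕ) (i : Fin n) :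
    Ez n d (α + Finsupp.single i.castSucc ((i:ℕ)+1)) = Ez n d α + (d - ((i:ℕ)+1)) := by
  unfold Ez
  rw [apply_add_single_castSucc_last]
  have h1 : ∀ j : Fin n, j ∈ Finset.univ →
      qf n (α + Finsupp.single i.castSucc ((i:ℕ)+1)) j * (d - ((j:ℕ)+1))
      = qf n α j * (d - ((j:ℕ)+1)) + (if j = i then d - ((i:ℕ)+1) else 0) := by
    intro j _
    rw [qf_add_castSucc, add_mul]
    congr 1
    by_cases h : j = i
    · subst h; rw [if_pos rfl, if_pos rfl, one_mul]
    · rw [if_neg h, if_neg h, zero_mul]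
  rw [Finset.sum_congr rfl h1, Finset.sum_add_distrib, Finset.sum_ite_eq' Finset.univ i
    (fun _ => d - ((i:ℕ)+1))]
  simp only [Finset.mem_univ, if_true]
  omega

lemma Ez_add_last (α : Fin (n+1) →₀ ℕ) (t : ℕ) :
    Ez n d (α + Finsupp.single (Fin.last n) t) = Ez n d α + t := by
  unfold Ez
  rw [apply_add_single_last_last]
  have h1 : ∀ j : Fin n, j ∈ Finset.univ →
      qf n (α + Finsupp.single (Fin.last n) t) j * (d - ((j:ℕ)+1))
      = qf n α j * (d - ((j:ℕ)+1)) := by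
    intro j _; rw [qf_add_last]
  rw [Finset.sum_congr rfl h1]
  omega

lemma cf_add_castSucc (α : Fin (n+1) →₀ ℕ) (i : Fin n) :
    cf k n d (α + Finsupp.single i.castSucc ((i:ℕ)+1))
      = (-((d.choose ((i:ℕ)+1) : ℕ) : k)) * cf k n d α := by
  unfold cf
  have h1 : ∀ j : Fin n, j ∈ Finset.univ →
      (-((d.choose ((j:ℕ)+1) : ℕ) : k))^(qf n (α + Finsupp.single i.castSucc ((i:ℕ)+1)) j)
      = (-((d.choose ((j:ℕ)+1) : ℕ) : k))^(qf n α j) *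
        (if j = i then (-((d.choose ((j:ℕ)+1) : ℕ) : k)) else 1) := by
    intro j _
    rw [qf_add_castSucc]
    by_cases h : j = i
    · subst h; rw [if_pos rfl, if_pos rfl, pow_add, pow_one]
    · rw [if_neg h, if_neg h, add_zero, mul_one]
  rw [Finset.prod_congr rfl h1, Finset.prod_mul_distrib, Finset.prod_ite_eq' Finset.univ i
    (fun j => (-((d.choose ((j:ℕ)+1) : ℕ) : k)))]
  simp only [Finset.mem_univ, if_true]
  ring

lemma cf_add_last (α : Fin (n+1) →₀ ℕ) (t : ℕ) :
    cf k n d (α + Finsupp.single (Fin.last n) t) = cf k n d α := by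
  unfold cf
  exact Finset.prod_congr rfl (fun j _ => by rw [qf_add_last])

lemma NF_eq_zero_of_ge (α : Fin (n+1) →₀ ℕ) (h : d ≤ Ez n d α) : NF k n d α = 0 := by
  unfold NF
  rw [dif_neg (Nat.not_lt.mpr h)]

lemma Ez_ge_last (α : Fin (n+1) →₀ ℕ) : α (Fin.last n) ≤ Ez n d α := Nat.le_add_right _ _

/-- The key relation: multiplying by `X i ^ (i+1)` has, after normalization, the same
effect as multiplying by `-C(d,i+1) * z^(d-i-1)`. -/
lemma NF_key (α : Fin (n+1) →₀ ℕ) (i : Fin n) :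
    NF k n d (α + Finsupp.single i.castSucc ((i:ℕ)+1))
      = (-((d.choose ((i:ℕ)+1) : ℕ) : k)) •
          NF k n d (α + Finsupp.single (Fin.last n) (d - ((i:ℕ)+1))) := by
  unfold NF
  by_cases h : Ez n d α + (d - ((i:ℕ)+1)) < d
  · rw [dif_pos (by rw [Ez_add_castSucc]; exact h), dif_pos (by rw [Ez_add_last]; exact h)]
    have htgt : tgt n d (α + Finsupp.single i.castSucc ((i:ℕ)+1))
          (by rw [Ez_add_castSucc]; exact h)
        = tgt n d (α + Finsupp.single (Fin.last n) (d - ((i:ℕ)+1)))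
          (by rw [Ez_add_last]; exact h) := by
      unfold tgt
      refine Prod.ext ?_ ?_
      · funext j
        exact Fin.ext (by simp only [rf_add_castSucc, rf_add_last])
      · exact Fin.ext (by simp only [Ez_add_castSucc, Ez_add_last])
    rw [htgt, cf_add_castSucc, cf_add_last]
    rw [← Pi.single_smul, smul_eq_mul]
  · rw [dif_neg (by rw [Ez_add_castSucc]; exact h), dif_neg (by rw [Ez_add_last]; exact h),
      smul_zero]

noncomputable def expof (m : MB n d) : Fin (n+1) →₀ ℕ :=
  Finsupp.equivFunOnFinite.symm
    (fun j => if h : (j:ℕ) < n then ((m.1 ⟨(j:ℕ), h⟩ : ℕ)) else (m.2:ℕ))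

lemma expof_castSucc (m : MB n d) (i : Fin n) : expof n d m i.castSucc = (m.1 i : ℕ) := by
  unfold expof
  simp only [Finsupp.coe_equivFunOnFinite_symm]
  rw [dif_pos (by simpa using i.isLt)]
  congr 1 <;> simp

lemma expof_last (m : MB n d) : expof n d m (Fin.last n) = (m.2:ℕ) := by
  unfold expof
  simp only [Finsupp.coe_equivFunOnFinite_symm]
  rw [dif_neg (by simp)]

lemma NF_expof (m : MB n d) : NF k n d (expof n d m) = Pi.single m (1:k) := by
  have hq : ∀ i : Fin n, qf n (expof n d m) i = 0 := by
    intro i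
    unfold qf
    rw [expof_castSucc]
    exact Nat.div_eq_of_lt (m.1 i).isLt
  have hEz : Ez n d (expof n d m) = (m.2 : ℕ) := by
    unfold Ez
    rw [expof_last]
    have : ∀ i : Fin n, i ∈ Finset.univ → qf n (expof n d m) i * (d - ((i:ℕ)+1)) = 0 := by
      intro i _; rw [hq i, zero_mul]
    rw [Finset.sum_congr rfl this]
    simp
  unfold NF
  rw [dif_pos (by rw [hEz]; exact m.2.isLt)]
  have hcf : cf k n d (expof n d m) = 1 := by
    unfold cf
    have : ∀ i : Fin n, i ∈ Finset.univ →
        (-((d.choose ((i:ℕ)+1) : ℕ) : k))^(qf n (expof n d m) i) = 1 := by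
      intro i _; rw [hq i, pow_zero]
    rw [Finset.prod_congr rfl this]
    simp
  have htgt : tgt n d (expof n d m) (by rw [hEz]; exact m.2.isLt) = m := by
    unfold tgt
    refine Prod.ext ?_ ?_
    · funext j
      refine Fin.ext ?_
      show rf n (expof n d m) j = (m.1 j : ℕ)
      unfold rf
      rw [expof_castSucc]
      exact Nat.mod_eq_of_lt (m.1 j).isLt
    · exact Fin.ext hEz
  rw [htgt, hcf]

end NFsec

end SS16

set_option maxHeartbeats 1000000 in
set_option synthInstance.maxHeartbeats 1000000 in
theorem stmt_16 (k : Type) [Field k] [CharZero k] (n d : ℕ)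
    (hn : 1 ≤ n) (hnd : n ≤ d) (hmod : n % 4 = 2) (hd : d % 2 = 0)
    (g : Fin (n + 1) → MvPolynomial (Fin (n + 1)) k)
    (hg : g = fun i : Fin (n + 1) =>
      if hi : (i : ℕ) < n then
        C ((d.choose ((i : ℕ) + 1) : ℕ) : k) * X (Fin.last n) ^ (d - ((i : ℕ) + 1)) +
          X i ^ ((i : ℕ) + 1)
      else X (Fin.last n) ^ d)
    (I : Ideal (MvPolynomial (Fin (n + 1)) k)) (hI : I = Ideal.span (Set.range g))
    (η : (MvPolynomial (Fin (n + 1)) k ⧸ I) →ₗ[k] k)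
    (hnondeg : ∀ q : MvPolynomial (Fin (n + 1)) k ⧸ I,
      (∀ r, η (q * r) = 0) → q = 0)
    (hjac : η (Ideal.Quotient.mk I
        (Matrix.of fun i j : Fin (n + 1) => pderiv j (g i)).det) =
      ((d * n.factorial : ℕ) : k)) :
    ∃ e : (MvPolynomial (Fin (n + 1)) k ⧸ I) ≃ₗ[k] (Fin (d * n.factorial / 2) × Fin 2 → k),
      ∀ q r : MvPolynomial (Fin (n + 1)) k ⧸ I,
        η (q * r) = ∑ m : Fin (d * n.factorial / 2),
          (e q (m, 0) * e r (m, 0) - e q (m, 1) * e r (m, 1)) := by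
  classical
  open SS16 in
  have hd1 : 1 ≤ d := le_trans hn hnd
  have hgl : ∀ i : Fin n, g i.castSucc
      = C ((d.choose ((i:ℕ)+1) : ℕ) : k) * X (Fin.last n) ^ (d - ((i:ℕ)+1))
        + X i.castSucc ^ ((i:ℕ)+1) := by
    intro i
    simp only [hg]
    rw [dif_pos (show ((i.castSucc : Fin (n+1)) : ℕ) < n by simpa using i.isLt)]
    simp [Fin.coe_castSucc]
  have hgn : g (Fin.last n) = X (Fin.last n) ^ d := by
    simp only [hg]
    rw [dif_neg (by simp [Fin.val_last])]
  -- the normalization map φ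
  set φ : MvPolynomial (Fin (n+1)) k →ₗ[k] (SS16.MB n d → k) :=
    (MvPolynomial.basisMonomials (Fin (n+1)) k).constr k (SS16.NF k n d) with hφdef
  have hφmono1 : ∀ α, φ (monomial α 1) = SS16.NF k n d α := by
    intro α
    have hb := congrFun (MvPolynomial.coe_basisMonomials (Fin (n+1)) k) α
    rw [hφdef, show (monomial α (1:k)) = (MvPolynomial.basisMonomials (Fin (n+1)) k) α from hb.symm]
    exact Module.Basis.constr_basis _ _ _ _
  have hφmono : ∀ α (c : k), φ (monomial α c) = c • SS16.NF k n d α := by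
    intro α c
    rw [show monomial α c = c • monomial α (1:k) by rw [MvPolynomial.smul_monomial, smul_eq_mul, mul_one],
      map_smul, hφmono1]
  have hφg : ∀ (j : Fin (n+1)) (α : Fin (n+1) →₀ ℕ), φ (g j * monomial α 1) = 0 := by
    intro j α
    rcases Nat.lt_or_ge (j:ℕ) n with hj | hj
    · set i : Fin n := ⟨(j:ℕ), hj⟩ with hi
      have hji : j = i.castSucc := Fin.ext (by simp [hi])
      rw [hji, hgl i, add_mul]
      have e1 : C ((d.choose ((i:ℕ)+1) : ℕ) : k) * X (Fin.last n) ^ (d - ((i:ℕ)+1)) * monomial α 1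
          = monomial (α + Finsupp.single (Fin.last n) (d - ((i:ℕ)+1))) ((d.choose ((i:ℕ)+1) : ℕ) : k) := by
        rw [X_pow_eq_monomial, C_mul_monomial, monomial_mul, mul_one, mul_one,
          add_comm (Finsupp.single (Fin.last n) (d - ((i:ℕ)+1))) α]
      have e2 : X i.castSucc ^ ((i:ℕ)+1) * monomial α (1:k)
          = monomial (α + Finsupp.single i.castSucc ((i:ℕ)+1)) (1:k) := by
        rw [X_pow_eq_monomial, monomial_mul, one_mul,
          add_comm (Finsupp.single i.castSucc ((i:ℕ)+1)) α]
      rw [e1, e2, map_add, hφmono, hφmono1, SS16.NF_key, ← add_smul, add_neg_cancel, zero_smul]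
    · have hjl : j = Fin.last n := by
        refine Fin.ext ?_
        have := j.isLt
        simp only [Fin.val_last]
        omega
      rw [hjl, hgn]
      have e3 : X (Fin.last n) ^ d * monomial α (1:k)
          = monomial (α + Finsupp.single (Fin.last n) d) (1:k) := by
        rw [X_pow_eq_monomial, monomial_mul, one_mul,
          add_comm (Finsupp.single (Fin.last n) d) α]
      rw [e3, hφmono1]
      refine SS16.NF_eq_zero_of_ge k n d _ ?_
      calc d ≤ (α + Finsupp.single (Fin.last n) d) (Fin.last n) := by
              rw [SS16.apply_add_single_last_last]; omega
        _ ≤ SS16.Ez n d _ := SS16.Ez_ge_last n d _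
  have hφI : ∀ p ∈ I, φ p = 0 := by
    have hmul : ∀ (j : Fin (n+1)) (p : MvPolynomial (Fin (n+1)) k), φ (p * g j) = 0 := by
      intro j p
      have hcomp : φ.comp (LinearMap.mulRight k (g j)) = 0 := by
        apply Module.Basis.ext (MvPolynomial.basisMonomials (Fin (n+1)) k)
        intro α
        have hb := congrFun (MvPolynomial.coe_basisMonomials (Fin (n+1)) k) α
        rw [LinearMap.comp_apply, LinearMap.mulRight_apply, hb, LinearMap.zero_apply, mul_comm]
        exact hφg j α
      have := LinearMap.congr_fun hcomp p
      rw [LinearMap.comp_apply, LinearMap.mulRight_apply, LinearMap.zero_apply] at this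
      exact this
    intro p hp
    rw [hI] at hp
    obtain ⟨cfn, hcfn⟩ := Ideal.mem_span_range_iff_exists_fun.mp hp
    rw [← hcfn, map_sum]
    exact Finset.sum_eq_zero (fun j _ => hmul j (cfn j))
  -- θ and ψ
  set θ : (SS16.MB n d → k) →ₗ[k] MvPolynomial (Fin (n+1)) k :=
    (Pi.basisFun k (SS16.MB n d)).constr k (fun m => monomial (SS16.expof n d m) (1:k)) with hθdef
  have hθ : ∀ m : SS16.MB n d, θ (Pi.single m 1) = monomial (SS16.expof n d m) 1 := by
    intro m
    rw [hθdef, ← Pi.basisFun_apply]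
    exact Module.Basis.constr_basis _ _ _ _
  set mkL : MvPolynomial (Fin (n+1)) k →ₗ[k] (MvPolynomial (Fin (n+1)) k ⧸ I) :=
    (Ideal.Quotient.mkₐ k I).toLinearMap with hmkLdef
  have hmkL : ∀ p, mkL p = Ideal.Quotient.mk I p := fun p => rfl
  set ψ := mkL.comp θ with hψdef
  have hψsingle : ∀ m : SS16.MB n d,
      ψ (Pi.single m 1) = Ideal.Quotient.mk I (monomial (SS16.expof n d m) 1) := by
    intro m
    rw [hψdef, LinearMap.comp_apply, hθ, hmkL]
  have hφθ : ∀ vv : SS16.MB n d → k, φ (θ vv) = vv := by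
    have hcomp : φ.comp θ = LinearMap.id := by
      apply Module.Basis.ext (Pi.basisFun k (SS16.MB n d))
      intro m
      rw [LinearMap.comp_apply, Pi.basisFun_apply, hθ, hφmono1, SS16.NF_expof,
        LinearMap.id_apply]
    intro vv
    have := LinearMap.congr_fun hcomp vv
    rw [LinearMap.comp_apply, LinearMap.id_apply] at this
    exact this
  -- the three cases of the normalization congruence
  have hcaseB : ∀ α : Fin (n+1) →₀ ℕ, d ≤ α (Fin.last n) →
      Ideal.Quotient.mk I (monomial α 1) = ψ (SS16.NF k n d α) := by
    intro α hb
    have hle : Finsupp.single (Fin.last n) d ≤ α := Finsupp.single_le_iff.mpr hb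
    have hαβ : (α - Finsupp.single (Fin.last n) d) + Finsupp.single (Fin.last n) d = α :=
      tsub_add_cancel_of_le hle
    have hmono : monomial α (1:k) = monomial (α - Finsupp.single (Fin.last n) d) 1
        * g (Fin.last n) := by
      rw [hgn, X_pow_eq_monomial, monomial_mul, mul_one, hαβ]
    have hg0 : Ideal.Quotient.mk I (g (Fin.last n)) = 0 :=
      Ideal.Quotient.eq_zero_iff_mem.mpr (by rw [hI]; exact Ideal.subset_span ⟨Fin.last n, rfl⟩)
    rw [hmono, map_mul, hg0, mul_zero,
      SS16.NF_eq_zero_of_ge k n d α (le_trans hb (SS16.Ez_ge_last n d α)), map_zero]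
  have hcaseR : ∀ α : Fin (n+1) →₀ ℕ, α (Fin.last n) < d →
      (∀ i : Fin n, α i.castSucc ≤ (i:ℕ)) →
      Ideal.Quotient.mk I (monomial α 1) = ψ (SS16.NF k n d α) := by
    intro α hb hred
    set m : SS16.MB n d :=
      (fun i => ⟨α i.castSucc, Nat.lt_succ_of_le (hred i)⟩, ⟨α (Fin.last n), hb⟩) with hm
    have hexp : SS16.expof n d m = α := by
      apply Finsupp.ext
      intro j
      induction j using Fin.lastCases with
      | last => rw [SS16.expof_last]
      | cast i => rw [SS16.expof_castSucc]
    rw [← hexp, SS16.NF_expof, hψsingle]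
  -- main congruence by induction
  have hcong : ∀ (N : ℕ) (α : Fin (n+1) →₀ ℕ), (∑ i : Fin n, α i.castSucc) ≤ N →
      Ideal.Quotient.mk I (monomial α 1) = ψ (SS16.NF k n d α) := by
    intro N
    induction N with
    | zero =>
      intro α h0
      rcases Nat.lt_or_ge (α (Fin.last n)) d with hb | hb
      · refine hcaseR α hb (fun i => ?_)
        have h1 : α i.castSucc = 0 :=
          Finset.sum_eq_zero_iff.mp (Nat.le_zero.mp h0) i (Finset.mem_univ i)
        omega
      · exact hcaseB α hb
    | succ N ih =>
      intro α hsum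
      rcases Nat.lt_or_ge (α (Fin.last n)) d with hb | hb
      swap
      · exact hcaseB α hb
      by_cases hex : ∃ i : Fin n, ((i:ℕ)+1) ≤ α i.castSucc
      swap
      · push_neg at hex
        exact hcaseR α hb (fun i => by have := hex i; omega)
      obtain ⟨i, hi⟩ := hex
      have hle : Finsupp.single i.castSucc ((i:ℕ)+1) ≤ α := Finsupp.single_le_iff.mpr hi
      set β := α - Finsupp.single i.castSucc ((i:ℕ)+1) with hβdef
      have hαβ : β + Finsupp.single i.castSucc ((i:ℕ)+1) = α := tsub_add_cancel_of_le hle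
      set α'' := β + Finsupp.single (Fin.last n) (d - ((i:ℕ)+1)) with hα''def
      have hsumβ : (∑ j : Fin n, α j.castSucc) = (∑ j : Fin n, β j.castSucc) + ((i:ℕ)+1) := by
        conv_lhs => rw [← hαβ]
        have h1 : ∀ j : Fin n, j ∈ Finset.univ →
            (β + Finsupp.single i.castSucc ((i:ℕ)+1)) j.castSucc
            = β j.castSucc + if j = i then (i:ℕ)+1 else 0 :=
          fun j _ => SS16.apply_add_single_castSucc n β i _ j
        rw [Finset.sum_congr rfl h1, Finset.sum_add_distrib,
          Finset.sum_ite_eq' Finset.univ i (fun _ => (i:ℕ)+1)]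
        simp
      have hsum'' : (∑ j : Fin n, α'' j.castSucc) ≤ N := by
        have h1 : ∀ j : Fin n, j ∈ Finset.univ → α'' j.castSucc = β j.castSucc :=
          fun j _ => SS16.apply_add_single_last n β _ j
        rw [Finset.sum_congr rfl h1]
        omega
      have IH := ih α'' hsum''
      have hmono : monomial α (1:k) = monomial β (1:k) * X i.castSucc ^ ((i:ℕ)+1) := by
        rw [X_pow_eq_monomial, monomial_mul, mul_one, hαβ]
      have hgmem : Ideal.Quotient.mk I (g i.castSucc) = 0 :=
        Ideal.Quotient.eq_zero_iff_mem.mpr (by rw [hI]; exact Ideal.subset_span ⟨i.castSucc, rfl⟩)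
      have hXpow : Ideal.Quotient.mk I (X i.castSucc ^ ((i:ℕ)+1))
          = - Ideal.Quotient.mk I (C ((d.choose ((i:ℕ)+1) : ℕ) : k)
              * X (Fin.last n) ^ (d - ((i:ℕ)+1))) := by
        have h1 : Ideal.Quotient.mk I (C ((d.choose ((i:ℕ)+1) : ℕ) : k)
              * X (Fin.last n) ^ (d - ((i:ℕ)+1)))
            + Ideal.Quotient.mk I (X i.castSucc ^ ((i:ℕ)+1)) = 0 := by
          rw [← map_add, ← hgl i, hgmem]
        linear_combination h1
      have hC : C ((d.choose ((i:ℕ)+1) : ℕ) : k) * X (Fin.last n) ^ (d - ((i:ℕ)+1))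
            * monomial β 1
          = monomial α'' ((d.choose ((i:ℕ)+1) : ℕ) : k) := by
        rw [X_pow_eq_monomial, C_mul_monomial, monomial_mul, mul_one, mul_one, hα''def,
          add_comm (Finsupp.single (Fin.last n) (d - ((i:ℕ)+1))) β]
      calc Ideal.Quotient.mk I (monomial α 1)
          = Ideal.Quotient.mk I (monomial β 1) * Ideal.Quotient.mk I (X i.castSucc ^ ((i:ℕ)+1)) := by
            rw [hmono, map_mul]
        _ = - (Ideal.Quotient.mk I (C ((d.choose ((i:ℕ)+1) : ℕ) : k)
              * X (Fin.last n) ^ (d - ((i:ℕ)+1)) * monomial β 1)) := by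
            rw [hXpow]
            simp only [map_mul]
            ring
        _ = - Ideal.Quotient.mk I (monomial α'' ((d.choose ((i:ℕ)+1) : ℕ) : k)) := by rw [hC]
        _ = (-((d.choose ((i:ℕ)+1) : ℕ) : k)) • Ideal.Quotient.mk I (monomial α'' 1) := by
            rw [show monomial α'' ((d.choose ((i:ℕ)+1) : ℕ) : k)
                = ((d.choose ((i:ℕ)+1) : ℕ) : k) • monomial α'' (1:k) by
              rw [MvPolynomial.smul_monomial, smul_eq_mul, mul_one]]
            rw [← hmkL, ← hmkL, map_smul, neg_smul]
        _ = (-((d.choose ((i:ℕ)+1) : ℕ) : k)) • ψ (SS16.NF k n d α'') := by rw [IH]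
        _ = ψ ((-((d.choose ((i:ℕ)+1) : ℕ) : k)) • SS16.NF k n d α'') := by rw [map_smul]
        _ = ψ (SS16.NF k n d (β + Finsupp.single i.castSucc ((i:ℕ)+1))) := by
            rw [SS16.NF_key, hα''def]
        _ = ψ (SS16.NF k n d α) := by rw [hαβ]
  have hcongα : ∀ α, Ideal.Quotient.mk I (monomial α 1) = ψ (SS16.NF k n d α) :=
    fun α => hcong (∑ i : Fin n, α i.castSucc) α le_rfl
  -- ψ is bijective
  have hsurj : Function.Surjective ψ := by
    intro q
    obtain ⟨p, rfl⟩ := Ideal.Quotient.mk_surjective q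
    suffices h : Ideal.Quotient.mk I p ∈ LinearMap.range ψ by
      obtain ⟨v, hv⟩ := h; exact ⟨v, hv⟩
    induction p using MvPolynomial.induction_on' with
    | monomial α c =>
      rw [show monomial α c = c • monomial α (1:k) by
          rw [MvPolynomial.smul_monomial, smul_eq_mul, mul_one], ← hmkL, map_smul]
      refine Submodule.smul_mem _ c ?_
      rw [hmkL, hcongα]
      exact ⟨SS16.NF k n d α, rfl⟩
    | add p q hp hq =>
      rw [map_add]
      exact Submodule.add_mem _ hp hq
  have hinj : Function.Injective ψ := by
    refine (injective_iff_map_eq_zero ψ).mpr ?_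
    intro v hv
    have hmem : θ v ∈ I := by
      refine Ideal.Quotient.eq_zero_iff_mem.mp ?_
      rw [← hmkL]
      exact hv
    have h1 := hφI (θ v) hmem
    rw [hφθ] at h1
    exact h1
  set Epsi : (SS16.MB n d → k) ≃ₗ[k] (MvPolynomial (Fin (n+1)) k ⧸ I) :=
    LinearEquiv.ofBijective ψ ⟨hinj, hsurj⟩ with hEpsi
  haveI : FiniteDimensional k (MvPolynomial (Fin (n+1)) k ⧸ I) := Module.Finite.equiv Epsi
  set bas : Module.Basis (SS16.MB n d) k (MvPolynomial (Fin (n+1)) k ⧸ I) :=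
    (Pi.basisFun k (SS16.MB n d)).map Epsi with hbasdef
  have hbas : ∀ m, bas m = Ideal.Quotient.mk I (monomial (SS16.expof n d m) 1) := by
    intro m
    rw [hbasdef, Module.Basis.map_apply, Pi.basisFun_apply]
    rw [hEpsi]; exact hψsingle m
  -- the bilinear form
  set B : (MvPolynomial (Fin (n+1)) k ⧸ I) →ₗ[k] (MvPolynomial (Fin (n+1)) k ⧸ I) →ₗ[k] k :=
    LinearMap.mk₂ k (fun q r => η (q * r))
      (fun q q' r => by
        change η ((q + q') * r) = η (q * r) + η (q' * r)
        rw [add_mul, map_add])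
      (fun c q r => by
        change η ((c • q) * r) = c • η (q * r)
        rw [smul_mul_assoc, map_smul])
      (fun q r r' => by
        change η (q * (r + r')) = η (q * r) + η (q * r')
        rw [mul_add, map_add])
      (fun c q r => by
        change η (q * (c • r)) = c • η (q * r)
        rw [mul_smul_comm, map_smul]) with hBdef
  have hBapply : ∀ q r, B q r = η (q * r) := fun q r => rfl
  have hsymmB : ∀ x y, B x y = B y x := by
    intro x y; rw [hBapply, hBapply, mul_comm]
  have hndB : ∀ x, (∀ y, B x y = 0) → x = 0 := by
    intro x hx
    exact hnondeg x (fun r => by rw [← hBapply]; exact hx r)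
  have hiso : ∀ s ∈ SS16.SB n d, ∀ t ∈ SS16.SB n d, B (bas s) (bas t) = 0 := by
    intro s hs t ht
    rw [hBapply, hbas, hbas, ← map_mul, monomial_mul, mul_one]
    have hEz : d ≤ SS16.Ez n d (SS16.expof n d s + SS16.expof n d t) := by
      unfold SS16.Ez
      rw [Finsupp.add_apply, SS16.expof_last, SS16.expof_last]
      have hq : ∀ i : Fin n, i ∈ Finset.univ →
          SS16.qf n (SS16.expof n d s + SS16.expof n d t) i * (d - ((i:ℕ)+1))
          = (((s.1 i : ℕ) + (t.1 i : ℕ)) / ((i:ℕ)+1)) * (d - ((i:ℕ)+1)) := by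
        intro i _
        unfold SS16.qf
        rw [Finsupp.add_apply, SS16.expof_castSucc, SS16.expof_castSucc]
      rw [Finset.sum_congr rfl hq]
      exact SS16.key_product_bound n d hd1 s t hs ht
    rw [hcongα, SS16.NF_eq_zero_of_ge k n d _ hEz, map_zero, map_zero]
  have hcard : Fintype.card (SS16.MB n d) = 2 * (SS16.SB n d).card := by
    rw [SS16.card_MB, ← SS16.card_SB n d hd1 hd]
  have hne : (SS16.SB n d).Nonempty := by
    rw [← Finset.card_pos]
    have h1 := SS16.card_SB n d hd1 hd
    have h3 : 0 < d * n.factorial := Nat.mul_pos hd1 (Nat.factorial_pos n)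
    omega
  obtain ⟨e0, he0⟩ := SS16.hyperbolic_of_isotropic_basis_subset bas B hsymmB hndB
    (SS16.SB n d) hne hiso hcard
  have hcard2 : (SS16.SB n d).card = d * n.factorial / 2 := by
    have h1 := SS16.card_SB n d hd1 hd
    omega
  set eS : Fin (d * n.factorial / 2) ≃ {x // x ∈ SS16.SB n d} :=
    ((SS16.SB n d).equivFinOfCardEq hcard2).symm with heSdef
  set P : ({x // x ∈ SS16.SB n d} × Fin 2 → k) ≃ₗ[k] (Fin (d * n.factorial / 2) × Fin 2 → k) :=
    LinearEquiv.funCongrLeft k k (Equiv.prodCongr eS (Equiv.refl (Fin 2))) with hPdef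
  refine ⟨e0.trans P, ?_⟩
  intro q r
  have hev : ∀ (x) (mm : Fin (d * n.factorial / 2)) (j : Fin 2),
      (e0.trans P) x (mm, j) = e0 x (eS mm, j) := fun x mm j => rfl
  rw [← hBapply, he0 q r,
    ← Equiv.sum_comp eS (fun s => (e0 q (s,(0:Fin 2)) * e0 r (s,(0:Fin 2))
      - e0 q (s,(1:Fin 2)) * e0 r (s,(1:Fin 2))))]
  exact Finset.sum_congr rfl (fun mm _ => by rw [hev, hev, hev, hev])
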